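/- (Preference property of greedy selection) Fix a finite multiset D over 𝒵, and suppose that for every finite multiset T over 𝒵 a strict total order <_T is given on 𝒵 ∪ {Stop}. Define the greedy map c by: starting from T = ∅, while there exists an element z of D \ T with Stop <_T z, append to T the <_T-maximal element of D \ T; return c(D) = T at termination. Then for every multiset S with c(D) ⊆ S ⊆ D (as multisets), the greedy map applied to S returns the same output: c(S) = c(D). -/
import Mathlib


/-- One run of the greedy selection meta-algorithm: `GreedyRun lt D T T'` means that,
starting from the current training multiset `T`, the greedy loop on dataset `D`
terminates with output `T'`.  Here `lt T a b` is the strict total order `<_T` on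
`𝒵 ∪ {Stop}` (with `none` playing the role of `Stop`): while some element `z` of the
multiset difference `D - T` satisfies `Stop <_T z`, the `<_T`-maximal element of `D - T`
is added to `T`. -/
inductive GreedyRun {𝒵 : Type*} [DecidableEq 𝒵] (lt : Multiset 𝒵 → Option 𝒵 → Option 𝒵 → Prop)
    (D : Multiset 𝒵) : Multiset 𝒵 → Multiset 𝒵 → Prop
  | done (T : Multiset 𝒵) (hstop : ∀ z ∈ D - T, ¬ lt T none (some z)) :
      GreedyRun lt D T T
  | step (T : Multiset 𝒵) (z : 𝒵) (T' : Multiset 𝒵)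
      (hcond : ∃ y ∈ D - T, lt T none (some y))
      (hmem : z ∈ D - T)
      (hmax : ∀ y ∈ D - T, y ≠ z → lt T (some y) (some z))
      (hrest : GreedyRun lt D (z ::ₘ T) T') :
      GreedyRun lt D T T'

theorem GreedyRun.start_le {𝒵 : Type*} [DecidableEq 𝒵]
    {lt : Multiset 𝒵 → Option 𝒵 → Option 𝒵 → Prop} {D U T : Multiset 𝒵}
    (h : GreedyRun lt D U T) : U ≤ T := by
  induction h with
  | done T _ => exact le_refl T
  | step T z T' _ _ _ _ ih => exact le_trans (Multiset.le_cons_self T z) ih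

theorem greedy_preference_aux {𝒵 : Type*} [DecidableEq 𝒵]
    (lt : Multiset 𝒵 → Option 𝒵 → Option 𝒵 → Prop)
    (htrans : ∀ (T : Multiset 𝒵) (a b c : Option 𝒵), lt T a b → lt T b c → lt T a c)
    (D S T U : Multiset 𝒵)
    (hrun : GreedyRun lt D U T)
    (hTS : T ≤ S) (hSD : S ≤ D) :
    GreedyRun lt S U T := by
  induction hrun with
  | done T hstop =>
      exact GreedyRun.done T (fun z hz =>
        hstop z (Multiset.mem_of_le (tsub_le_tsub_right hSD T) hz))
  | step T₀ z T' hcond hmem hmax hrest ih =>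
      have hzT : z ::ₘ T₀ ≤ T' := hrest.start_le
      have hzS : z ::ₘ T₀ ≤ S := le_trans hzT hTS
      have hmemS : z ∈ S - T₀ := by
        rw [Multiset.mem_sub]
        have := Multiset.count_le_of_le z hzS
        simpa [Multiset.count_cons_self] using this
      refine GreedyRun.step T₀ z T' ⟨z, hmemS, ?_⟩ hmemS
        (fun y hy hne => hmax y (Multiset.mem_of_le (tsub_le_tsub_right hSD T₀) hy) hne)
        (ih hTS)
      -- lt T₀ none (some z)
      obtain ⟨y, hy, hlty⟩ := hcond
      by_cases hyz : y = z
      · exact hyz ▸ hlty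
      · exact htrans T₀ none (some y) (some z) hlty (hmax y hy hyz)

/-- Preference property of greedy selection: if the greedy run on `D` (started from the
empty multiset) outputs `c(D) = T`, then for every multiset `S` with `c(D) ⊆ S ⊆ D`
(multiset inclusion) the greedy run on `S` outputs the same `T`, i.e. `c(S) = c(D)`. -/
theorem greedy_preference {𝒵 : Type*} [DecidableEq 𝒵]
    (lt : Multiset 𝒵 → Option 𝒵 → Option 𝒵 → Prop)
    (hirrefl : ∀ (T : Multiset 𝒵) (a : Option 𝒵), ¬ lt T a a)
    (htrans : ∀ (T : Multiset 𝒵) (a b c : Option 𝒵), lt T a b → lt T b c → lt T a c)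
    (htrichot : ∀ (T : Multiset 𝒵) (a b : Option 𝒵), lt T a b ∨ a = b ∨ lt T b a)
    (D S T : Multiset 𝒵)
    (hrun : GreedyRun lt D 0 T)
    (hTS : T ≤ S) (hSD : S ≤ D) :
    GreedyRun lt S 0 T := by
  exact greedy_preference_aux lt htrans D S T 0 hrun hTS hSD
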